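/- With the notation above, the map E(L) := pr₋ ∘ (pr₊|_L)^{-1} defines a bijection between the set of p-dimensional subspaces L of V on which h is positive definite and the set of linear maps A : W₊ → W₋ such that Id − A*A is positive definite, where the adjoint A* is taken with respect to the positive definite forms h|_{W₊} and −h|_{W₋}. -/

import Mathlib

open Module

private def formCore {G : Type*} [AddCommGroup G] [Module ℂ G] (hG : G → G → ℂ)
    (hGadd : ∀ x x' y, hG (x + x') y = hG x y + hG x' y)
    (hGsmul : ∀ (c : ℂ) x y, hG (c • x) y = c * hG x y)
    (hGherm : ∀ x y, hG x y = star (hG y x))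
    (hGpos : ∀ x, x ≠ 0 → 0 < (hG x x).re) :
    InnerProductSpace.Core ℂ G where
  inner x y := hG y x
  conj_inner_symm x y := by
    show star (hG x y) = hG y x
    rw [← hGherm]
  re_inner_nonneg x := by
    show 0 ≤ (hG x x).re
    rcases eq_or_ne x 0 with rfl | hx
    · have := hGsmul 0 0 0
      simp only [zero_smul, zero_mul] at this
      simp [this]
    · exact (hGpos x hx).le
  add_left x y z := by
    show hG z (x + y) = hG z x + hG z y
    rw [hGherm z (x + y), hGadd, star_add, ← hGherm, ← hGherm]
  smul_left x y r := by
    show hG y (r • x) = star r * hG y x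
    rw [hGherm y (r • x), hGsmul, star_mul', ← hGherm]
  definite x hx := by
    by_contra hne
    have h1 := hGpos x hne
    have h2 : hG x x = 0 := hx
    rw [h2] at h1
    simp at h1

/-- Existence of an adjoint with respect to positive definite hermitian forms. -/
private lemma exists_adjoint_aux {E F : Type*} [AddCommGroup E] [Module ℂ E]
    [FiniteDimensional ℂ E] [AddCommGroup F] [Module ℂ F] [FiniteDimensional ℂ F]
    (hE : E → E → ℂ) (hF : F → F → ℂ)
    (hEadd : ∀ x x' y, hE (x + x') y = hE x y + hE x' y)
    (hEsmul : ∀ (c : ℂ) x y, hE (c • x) y = c * hE x y)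
    (hEherm : ∀ x y, hE x y = star (hE y x))
    (hEpos : ∀ x, x ≠ 0 → 0 < (hE x x).re)
    (hFadd : ∀ x x' y, hF (x + x') y = hF x y + hF x' y)
    (hFsmul : ∀ (c : ℂ) x y, hF (c • x) y = c * hF x y)
    (hFherm : ∀ x y, hF x y = star (hF y x))
    (hFpos : ∀ x, x ≠ 0 → 0 < (hF x x).re)
    (A : E →ₗ[ℂ] F) :
    ∃ B : F →ₗ[ℂ] E, ∀ w v, hE (B w) v = hF w (A v) := by
  letI cE : InnerProductSpace.Core ℂ E := formCore hE hEadd hEsmul hEherm hEpos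
  letI cF : InnerProductSpace.Core ℂ F := formCore hF hFadd hFsmul hFherm hFpos
  letI : NormedAddCommGroup E := cE.toNormedAddCommGroup
  letI : InnerProductSpace ℂ E := InnerProductSpace.ofCore cE.toCore
  letI : NormedAddCommGroup F := cF.toNormedAddCommGroup
  letI : InnerProductSpace ℂ F := InnerProductSpace.ofCore cF.toCore
  refine ⟨LinearMap.adjoint A, fun w v => ?_⟩
  have key : (inner ℂ (LinearMap.adjoint A w) v : ℂ) = inner ℂ w (A v) :=
    LinearMap.adjoint_inner_left A v w
  have key' : hE v (LinearMap.adjoint A w) = hF (A v) w := key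
  rw [hEherm, key', ← hFherm]

theorem stmt_2
    {V : Type*} [AddCommGroup V] [Module ℂ V] [FiniteDimensional ℂ V]
    (p q : ℕ) (hpq : p ≤ q) (hdim : Module.finrank ℂ V = p + q)
    (h : V → V → ℂ)
    (hadd : ∀ x x' y : V, h (x + x') y = h x y + h x' y)
    (hsmul : ∀ (c : ℂ) (x y : V), h (c • x) y = c * h x y)
    (hherm : ∀ x y : V, h x y = star (h y x))
    (Wp Wm : Submodule ℂ V) (hcompl : IsCompl Wp Wm)
    (horth : ∀ x ∈ Wp, ∀ y ∈ Wm, h x y = 0)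
    (hdimp : Module.finrank ℂ Wp = p) (hdimm : Module.finrank ℂ Wm = q)
    (hpos : ∀ x ∈ Wp, x ≠ 0 → 0 < (h x x).re)
    (hneg : ∀ x ∈ Wm, x ≠ 0 → (h x x).re < 0) :
    ∃ e : {L : Submodule ℂ V // Module.finrank ℂ L = p ∧
              ∀ x ∈ L, x ≠ 0 → 0 < (h x x).re} ≃
          {A : ↥Wp →ₗ[ℂ] ↥Wm //
              ∀ Astar : ↥Wm →ₗ[ℂ] ↥Wp,
                (∀ (w : ↥Wm) (v : ↥Wp), h ↑(Astar w) ↑v = -(h ↑w ↑(A v))) →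
                ∀ v : ↥Wp, v ≠ 0 → 0 < (h ↑v ↑v - h ↑(Astar (A v)) ↑v).re},
      ∀ L, ∀ x : V, x ∈ L.1 ↔ ∃ w : ↥Wp, x = ↑w + ↑((e L).1 w) := by
  classical
  -- basic sesquilinearity facts
  have hadd2 : ∀ x y y' : V, h x (y + y') = h x y + h x y' := fun x y y' => by
    rw [hherm, hadd, star_add, ← hherm, ← hherm]
  have horth' : ∀ y ∈ Wm, ∀ x ∈ Wp, h y x = 0 := fun y hy x hx => by
    rw [hherm, horth x hx y hy, star_zero]
  have hsum : ∀ a b : V, a ∈ Wp → b ∈ Wm → h (a + b) (a + b) = h a a + h b b := by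
    intro a b ha hb
    rw [hadd, hadd2, hadd2, horth a ha b hb, horth' b hb a ha, add_zero, zero_add]
  -- projections
  set prp : V →ₗ[ℂ] ↥Wp := Wp.projectionOnto Wm hcompl with hprp_def
  set prm : V →ₗ[ℂ] ↥Wm := Wm.projectionOnto Wp hcompl.symm with hprm_def
  have hdecomp : ∀ x : V, (↑(prp x) + ↑(prm x) : V) = x := fun x =>
    Submodule.projection_add_projection_eq_self hcompl x
  have hprp2 : ∀ (u : ↥Wp) (m : ↥Wm), prp (↑u + ↑m) = u := by
    intro u m
    rw [map_add, Submodule.projectionOnto_apply_left hcompl u,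
      Submodule.projectionOnto_apply_right hcompl m, add_zero]
  have hprm2 : ∀ (u : ↥Wp) (m : ↥Wm), prm (↑u + ↑m) = m := by
    intro u m
    rw [map_add, Submodule.projectionOnto_apply_left hcompl.symm m,
      Submodule.projectionOnto_apply_right hcompl.symm u, zero_add]
  -- the two subtype types
  -- forward existence
  have main : ∀ L : {L : Submodule ℂ V // Module.finrank ℂ L = p ∧
        ∀ x ∈ L, x ≠ 0 → 0 < (h x x).re},
      ∃ A : {A : ↥Wp →ₗ[ℂ] ↥Wm //
          ∀ Astar : ↥Wm →ₗ[ℂ] ↥Wp,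
            (∀ (w : ↥Wm) (v : ↥Wp), h ↑(Astar w) ↑v = -(h ↑w ↑(A v))) →
            ∀ v : ↥Wp, v ≠ 0 → 0 < (h ↑v ↑v - h ↑(Astar (A v)) ↑v).re},
        ∀ x : V, x ∈ L.1 ↔ ∃ w : ↥Wp, x = ↑w + ↑(A.1 w) := by
    rintro ⟨Lsub, hL1, hL2⟩
    set f : ↥Lsub →ₗ[ℂ] ↥Wp := prp.comp Lsub.subtype with hf_def
    have hker : ∀ x : ↥Lsub, f x = 0 → x = 0 := by
      intro x hx
      have hxm : (↑x : V) ∈ Wm :=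
        (Submodule.projectionOnto_apply_eq_zero_iff hcompl).mp hx
      by_contra hxe
      have hxv : (↑x : V) ≠ 0 := fun hc => hxe (Subtype.ext hc)
      exact absurd (hL2 ↑x x.2 hxv) (not_lt.mpr (hneg ↑x hxm hxv).le)
    have hinj : Function.Injective f := by
      rw [← LinearMap.ker_eq_bot]
      exact (Submodule.eq_bot_iff _).mpr fun x hx => hker x hx
    have hsurj : Function.Surjective f :=
      (LinearMap.injective_iff_surjective_of_finrank_eq_finrank
        (by rw [hL1, hdimp])).mp hinj
    set feq : ↥Lsub ≃ₗ[ℂ] ↥Wp := LinearEquiv.ofBijective f ⟨hinj, hsurj⟩ with hfeq_def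
    set A : ↥Wp →ₗ[ℂ] ↥Wm :=
      prm.comp (Lsub.subtype.comp feq.symm.toLinearMap) with hA_def
    have key : ∀ v : ↥Wp, (↑(feq.symm v) : V) = ↑v + ↑(A v) := by
      intro v
      have h1 : prp ↑(feq.symm v) = v := feq.apply_symm_apply v
      conv_lhs => rw [← hdecomp ↑(feq.symm v)]
      rw [h1]
      rfl
    have hmem : ∀ x : V, x ∈ Lsub ↔ ∃ w : ↥Wp, x = ↑w + ↑(A w) := by
      intro x
      constructor
      · intro hx
        refine ⟨feq ⟨x, hx⟩, ?_⟩
        rw [← key (feq ⟨x, hx⟩), feq.symm_apply_apply]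
      · rintro ⟨w, rfl⟩
        rw [← key w]
        exact (feq.symm w).2
    refine ⟨⟨A, ?_⟩, hmem⟩
    intro Astar hchar v hv
    have hv' : feq.symm v ≠ 0 := by
      intro hc
      apply hv
      have := feq.apply_symm_apply v
      rw [hc, map_zero] at this
      exact this.symm
    have hvV : (↑(feq.symm v) : V) ≠ 0 := fun hc =>
      hv' (Submodule.coe_eq_zero.mp hc)
    have hpos0 := hL2 ↑(feq.symm v) (feq.symm v).2 hvV
    rw [key v, hsum ↑v ↑(A v) v.2 (A v).2] at hpos0
    rw [hchar (A v) v, sub_neg_eq_add]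
    exact hpos0
  -- backward existence
  have back : ∀ A : {A : ↥Wp →ₗ[ℂ] ↥Wm //
        ∀ Astar : ↥Wm →ₗ[ℂ] ↥Wp,
          (∀ (w : ↥Wm) (v : ↥Wp), h ↑(Astar w) ↑v = -(h ↑w ↑(A v))) →
          ∀ v : ↥Wp, v ≠ 0 → 0 < (h ↑v ↑v - h ↑(Astar (A v)) ↑v).re},
      ∃ L : {L : Submodule ℂ V // Module.finrank ℂ L = p ∧
          ∀ x ∈ L, x ≠ 0 → 0 < (h x x).re},
        ∀ x : V, x ∈ L.1 ↔ ∃ w : ↥Wp, x = ↑w + ↑(A.1 w) := by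
    rintro ⟨A, hA⟩
    set g : ↥Wp →ₗ[ℂ] V := Wp.subtype + Wm.subtype.comp A with hg_def
    have hgapply : ∀ w : ↥Wp, g w = ↑w + ↑(A w) := fun w => rfl
    have hginj : Function.Injective g := by
      intro a b hab
      have := congrArg prp hab
      rw [hgapply, hgapply, hprp2, hprp2] at this
      exact this
    set Lsub : Submodule ℂ V := LinearMap.range g with hLsub_def
    have hLdim : Module.finrank ℂ ↥Lsub = p := by
      rw [← hdimp]
      exact (LinearEquiv.ofInjective g hginj).finrank_eq.symm
    obtain ⟨B, hB⟩ := exists_adjoint_aux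
      (fun x y : ↥Wp => h ↑x ↑y) (fun x y : ↥Wm => -(h ↑x ↑y))
      (fun x x' y => by
        show h ↑(x + x') ↑y = h ↑x ↑y + h ↑x' ↑y
        rw [Submodule.coe_add]; exact hadd _ _ _)
      (fun c x y => by
        show h ↑(c • x) ↑y = c * h ↑x ↑y
        rw [Submodule.coe_smul]; exact hsmul _ _ _)
      (fun x y => hherm ↑x ↑y)
      (fun x hx => hpos ↑x x.2 fun hc => hx (Submodule.coe_eq_zero.mp hc))
      (fun x x' y => by
        show -h ↑(x + x') ↑y = -h ↑x ↑y + -h ↑x' ↑y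
        rw [Submodule.coe_add, hadd]; ring)
      (fun c x y => by
        show -h ↑(c • x) ↑y = c * -h ↑x ↑y
        rw [Submodule.coe_smul, hsmul]; ring)
      (fun x y => by
        show -h ↑x ↑y = star (-h ↑y ↑x)
        rw [star_neg, ← hherm])
      (fun x hx => by
        show 0 < (-h ↑x ↑x).re
        rw [Complex.neg_re]
        exact neg_pos.mpr (hneg ↑x x.2 fun hc => hx (Submodule.coe_eq_zero.mp hc)))
      A
    have hB' : ∀ (w : ↥Wm) (v : ↥Wp), h ↑(B w) ↑v = -(h ↑w ↑(A v)) := hB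
    have hLpos : ∀ x ∈ Lsub, x ≠ 0 → 0 < (h x x).re := by
      rintro x hx hx0
      obtain ⟨w, rfl⟩ := hx
      have hw0 : w ≠ 0 := fun hc => hx0 (by rw [hc, map_zero])
      have hkey := hA B hB' w hw0
      rw [hB' (A w) w, sub_neg_eq_add] at hkey
      rw [hgapply w, hsum ↑w ↑(A w) w.2 (A w).2]
      exact hkey
    refine ⟨⟨Lsub, hLdim, hLpos⟩, ?_⟩
    intro x
    constructor
    · rintro ⟨w, rfl⟩
      exact ⟨w, (hgapply w).symm⟩
    · rintro ⟨w, rfl⟩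
      exact ⟨w, hgapply w⟩
  choose F hF using main
  choose G hG using back
  -- uniqueness of L given A
  have uniqL : ∀ (L₁ L₂ : {L : Submodule ℂ V // Module.finrank ℂ L = p ∧
        ∀ x ∈ L, x ≠ 0 → 0 < (h x x).re})
      (A : ↥Wp →ₗ[ℂ] ↥Wm),
      (∀ x : V, x ∈ L₁.1 ↔ ∃ w : ↥Wp, x = ↑w + ↑(A w)) →
      (∀ x : V, x ∈ L₂.1 ↔ ∃ w : ↥Wp, x = ↑w + ↑(A w)) → L₁ = L₂ := by
    intro L₁ L₂ A h1 h2
    apply Subtype.ext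
    ext x
    rw [h1 x, ← h2 x]
  have uniqA : ∀ (L : {L : Submodule ℂ V // Module.finrank ℂ L = p ∧
        ∀ x ∈ L, x ≠ 0 → 0 < (h x x).re})
      (A₁ A₂ : ↥Wp →ₗ[ℂ] ↥Wm),
      (∀ x : V, x ∈ L.1 ↔ ∃ w : ↥Wp, x = ↑w + ↑(A₁ w)) →
      (∀ x : V, x ∈ L.1 ↔ ∃ w : ↥Wp, x = ↑w + ↑(A₂ w)) → A₁ = A₂ := by
    intro L A₁ A₂ h1 h2
    apply LinearMap.ext
    intro w
    have hx : (↑w + ↑(A₁ w) : V) ∈ L.1 := (h1 _).mpr ⟨w, rfl⟩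
    obtain ⟨w', hw'⟩ := (h2 _).mp hx
    have ew : w = w' := by
      have := congrArg prp hw'
      rw [hprp2, hprp2] at this
      exact this
    have em : A₁ w = A₂ w' := by
      have := congrArg prm hw'
      rw [hprm2, hprm2] at this
      exact this
    rw [em, ← ew]
  refine ⟨⟨F, G, ?_, ?_⟩, fun L x => hF L x⟩
  · intro L
    exact uniqL (G (F L)) L (F L).1 (hG (F L)) (hF L)
  · intro A
    exact Subtype.ext (uniqA (G A) (F (G A)).1 A.1 (hF (G A)) (hG A))
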